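/- (Appendix A, Proposition 5, constructive form: operator Schmidt rank of a Heisenberg operator is at most the square of that of the propagator.) Let ιA, ιB be finite types and suppose the matrix U on ιA × ιB admits a decomposition U = ∑_{i : Fin r} A_i ⊗ₖ B_i with A_i matrices on ιA and B_i matrices on ιB. Then for any matrices O_A on ιA and O_B on ιB there exist families Ã : Fin (r²) → Matrix ιA ιA ℂ and B̃ : Fin (r²) → Matrix ιB ιB ℂ such that Uᴴ * (O_A ⊗ₖ O_B) * U = ∑_{ℓ : Fin (r²)} Ã_ℓ ⊗ₖ B̃_ℓ. Consequently, if the Heisenberg operator Uᴴ (O_A ⊗ₖ O_B) U cannot be written as a sum of fewer than s Kronecker products, then U cannot be written as a sum of fewer than √s Kronecker products, i.e. E^{(0)}(U) ≥ (1/2)·E^{(0)}(Uᴴ(O_A⊗O_B)U). -/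
import Mathlib


open Matrix Kronecker
open scoped Classical

noncomputable section

/-- Single-qubit Pauli matrices. -/
def pauli : Fin 4 → Matrix (Fin 2) (Fin 2) ℂ :=
  ![1, !![0, 1; 1, 0], !![0, -Complex.I; Complex.I, 0], !![1, 0; 0, -1]]

/-- Pauli string on `N` qubits with label `a`. -/
def PauliString {N : ℕ} (a : Fin N → Fin 4) :
    Matrix (Fin N → Fin 2) (Fin N → Fin 2) ℂ :=
  fun f g => ∏ k, pauli (a k) (f k) (g k)

/-- Reduced Choi state: partial trace over the doubled-B factor of the
normalized Choi state of `O`. -/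
def rhoA {ιA ιB : Type*} [Fintype ιA] [Fintype ιB]
    (O : Matrix (ιA × ιB) (ιA × ιB) ℂ) :
    Matrix (ιA × ιA) (ιA × ιA) ℂ :=
  fun p q =>
    (1 / (Fintype.card ιA * Fintype.card ιB : ℂ)) *
      ∑ b : ιB, ∑ b' : ιB, O (p.1, b) (p.2, b') * star (O (q.1, b) (q.2, b'))

/-- Identification of `N = N_A + N_B` qubits with the pair of subsystems. -/
def qubitEquiv (NA NB : ℕ) :
    (Fin (NA + NB) → Fin 2) ≃ (Fin NA → Fin 2) × (Fin NB → Fin 2) :=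
  (Equiv.arrowCongr finSumFinEquiv.symm (Equiv.refl (Fin 2))).trans
    (Equiv.sumArrowEquivProdArrow _ _ _)

/-- Reduced Choi state of an `N = N_A + N_B` qubit operator, subsystem A
being the first `N_A` qubits. -/
def rhoAq (NA NB : ℕ)
    (O : Matrix (Fin (NA + NB) → Fin 2) (Fin (NA + NB) → Fin 2) ℂ) :
    Matrix ((Fin NA → Fin 2) × (Fin NA → Fin 2))
      ((Fin NA → Fin 2) × (Fin NA → Fin 2)) ℂ :=
  rhoA (Matrix.reindex (qubitEquiv NA NB) (qubitEquiv NA NB) O)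

/-- `n`-fold replica (tensor power) of a matrix. -/
def replica {ι : Type*} (n : ℕ) (O : Matrix ι ι ℂ) :
    Matrix (Fin n → ι) (Fin n → ι) ℂ :=
  fun f g => ∏ a, O (f a) (g a)

/-- Replica permutation operator. -/
def Tperm {ι : Type*} [DecidableEq ι] {n : ℕ} (π : Equiv.Perm (Fin n)) :
    Matrix (Fin n → ι) (Fin n → ι) ℂ :=
  fun f g => if f = g ∘ π then 1 else 0

/-- Number of cycles of a permutation, counting fixed points as 1-cycles. -/
def numCycles {n : ℕ} (π : Equiv.Perm (Fin n)) : ℕ :=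
  Multiset.card π.cycleType + (Finset.univ.filter fun x => π x = x).card

/-- `δ(π) = 0` if `π` has no fixed points and all cycles of even length,
else `δ(π) = 1`. -/
def deltaOdd {n : ℕ} (π : Equiv.Perm (Fin n)) : ℕ :=
  if (∀ x, π x ≠ x) ∧ (∀ c ∈ π.cycleType, Even c) then 0 else 1

/-- Projector onto four-fold replicated Pauli strings. -/
def LambdaPlus (N : ℕ) :
    Matrix (Fin 4 → (Fin N → Fin 2)) (Fin 4 → (Fin N → Fin 2)) ℂ :=
  (1 / (4 ^ N : ℂ)) • ∑ a : Fin N → Fin 4, replica 4 (PauliString a)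

def permA : Equiv.Perm (Fin 4) := Equiv.swap 0 1 * Equiv.swap 2 3
def permB : Equiv.Perm (Fin 4) := Equiv.swap 0 3 * Equiv.swap 1 2

/-- The purity contraction permutation operator `T'` on four replicas of a
bipartite system. -/
def Tprime {ιA ιB : Type*} [DecidableEq ιA] [DecidableEq ιB] :
    Matrix (Fin 4 → ιA × ιB) (Fin 4 → ιA × ιB) ℂ :=
  fun f g =>
    if (∀ a, (f a).1 = (g (permA a)).1 ∧ (f a).2 = (g (permB a)).2) then 1 else 0

/-- The unitary stabilizer group of `U` (as a finite set of pairs of Pauli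
labels). -/
def Stab {N : ℕ} (U : Matrix (Fin N → Fin 2) (Fin N → Fin 2) ℂ) :
    Finset ((Fin N → Fin 4) × (Fin N → Fin 4)) :=
  Finset.univ.filter fun p =>
    Matrix.trace (PauliString p.1 * Uᴴ * PauliString p.2 * U) / (2 ^ N : ℂ)
      ∈ ({1, -1} : Set ℂ)

lemma kron_conjT_aux {ιA ιB : Type*} (A : Matrix ιA ιA ℂ) (B : Matrix ιB ιB ℂ) :
    (A ⊗ₖ B)ᴴ = Aᴴ ⊗ₖ Bᴴ := by
  ext ⟨a, b⟩ ⟨c, d⟩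
  simp [conjTranspose_apply, kroneckerMap_apply, mul_comm]


/-- Appendix A, Proposition 5, constructive form: if `U` is a
sum of `r` Kronecker products then `Uᴴ (O_A ⊗ O_B) U` is a sum of `r²`
Kronecker products. -/
theorem heisenberg_schmidt_rank_le_sq {ιA ιB : Type*}
    [Fintype ιA] [Fintype ιB] [DecidableEq ιA] [DecidableEq ιB]
    (r : ℕ) (U : Matrix (ιA × ιB) (ιA × ιB) ℂ)
    (A : Fin r → Matrix ιA ιA ℂ) (B : Fin r → Matrix ιB ιB ℂ)
    (hU : U = ∑ i : Fin r, A i ⊗ₖ B i)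
    (OA : Matrix ιA ιA ℂ) (OB : Matrix ιB ιB ℂ) :
    ∃ Atil : Fin (r ^ 2) → Matrix ιA ιA ℂ,
      ∃ Btil : Fin (r ^ 2) → Matrix ιB ιB ℂ,
        Uᴴ * (OA ⊗ₖ OB) * U = ∑ l : Fin (r ^ 2), Atil l ⊗ₖ Btil l := by
  have e : Fin (r ^ 2) ≃ Fin r × Fin r :=
    (finCongr (sq r)).trans finProdFinEquiv.symm
  refine ⟨fun l => (A (e l).1)ᴴ * OA * A (e l).2,
          fun l => (B (e l).1)ᴴ * OB * B (e l).2, ?_⟩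
  rw [Equiv.sum_comp e
    (fun p : Fin r × Fin r => ((A p.1)ᴴ * OA * A p.2) ⊗ₖ ((B p.1)ᴴ * OB * B p.2))]
  subst hU
  rw [conjTranspose_sum, Finset.sum_mul, Finset.sum_mul, Fintype.sum_prod_type]
  refine Finset.sum_congr rfl fun i _ => ?_
  rw [Finset.mul_sum]
  refine Finset.sum_congr rfl fun j _ => ?_
  rw [kron_conjT_aux, ← mul_kronecker_mul, ← mul_kronecker_mul]

end
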